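/- Let φ : ℝ^D → ℝ^d be twice continuously differentiable, f : ℝ^d → ℝ be twice continuously differentiable, and ℓ := f ∘ φ. Let h : ℝ^D → ℝ^N be continuously differentiable with ∂φ(θ) ∇h_k(θ) = 0 for all θ ∈ ℝ^D and every component h_k of h. Let θ_0 ∈ ℝ^D, let U ⊆ ℝ^D be open with θ_0 ∈ U, set M(θ) := ∂φ(θ) ∂φ(θ)^⊤ ∈ ℝ^{d×d} and M_{θ_0} := {θ ∈ ℝ^D : h(θ) = h(θ_0)}, and suppose there is a function K : ℝ^d → ℝ^{d×d} with M(θ) = K(φ(θ)) for all θ ∈ M_{θ_0} ∩ U. If θ : [0,T) → ℝ^D is differentiable with θ'(t) = −∇ℓ(θ(t)) for all t and θ(0) = θ_0, then for every t with θ(t) ∈ U one has M(θ(t)) = K(φ(θ(t))), and consequently the curve z(t) := φ(θ(t)) satisfies z'(t) = −K(z(t)) ∇f(z(t)) at every such t. -/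

import Mathlib

open InnerProductSpace ContinuousLinearMap

lemma inner_gradient_apply' {E : Type*} [NormedAddCommGroup E] [InnerProductSpace ℝ E]
    [CompleteSpace E] (g : E → ℝ) (x v : E) :
    @inner ℝ _ _ (gradient g x) v = fderiv ℝ g x v := by
  rw [gradient, InnerProductSpace.toDual_symm_apply]

lemma gradient_comp_eq' {E F : Type*} [NormedAddCommGroup E] [InnerProductSpace ℝ E]
    [CompleteSpace E] [NormedAddCommGroup F] [InnerProductSpace ℝ F] [CompleteSpace F]
    (φ : E → F) (f : F → ℝ) (hφ : Differentiable ℝ φ) (hf : Differentiable ℝ f) (x : E) :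
    gradient (f ∘ φ) x = ContinuousLinearMap.adjoint (fderiv ℝ φ x) (gradient f (φ x)) := by
  apply ext_inner_right ℝ
  intro v
  rw [inner_gradient_apply', ContinuousLinearMap.adjoint_inner_left, inner_gradient_apply',
    fderiv_comp x (hf (φ x)) (hφ x)]
  rfl

/-- If `M(θ) := ∂φ(θ) ∂φ(θ)ᵀ` agrees with `K ∘ φ` on the level set of a
vector-valued conservation law `h` (intersected with an open set `U`), then along any
gradient-flow trajectory of `ℓ = f ∘ φ` started at `θ₀` one has `M(θ(t)) = K(φ(θ(t)))`
whenever `θ(t) ∈ U`, and the lifted curve `z = φ ∘ θ` satisfies `z' = −K(z) ∇f(z)` there. -/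
theorem intrinsic_metric_implies_intrinsic_dynamic
    (D d N : ℕ)
    (φ : EuclideanSpace ℝ (Fin D) → EuclideanSpace ℝ (Fin d))
    (f : EuclideanSpace ℝ (Fin d) → ℝ)
    (hφ : ContDiff ℝ 2 φ) (hf : ContDiff ℝ 2 f)
    (h : EuclideanSpace ℝ (Fin D) → EuclideanSpace ℝ (Fin N))
    (hh : ContDiff ℝ 1 h)
    (hcons : ∀ (θ : EuclideanSpace ℝ (Fin D)) (k : Fin N),
      fderiv ℝ φ θ (gradient (fun x => h x k) θ) = 0)
    (θ₀ : EuclideanSpace ℝ (Fin D))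
    (U : Set (EuclideanSpace ℝ (Fin D))) (hU : IsOpen U) (hθ₀U : θ₀ ∈ U)
    (K : EuclideanSpace ℝ (Fin d) →
      (EuclideanSpace ℝ (Fin d) →L[ℝ] EuclideanSpace ℝ (Fin d)))
    (hK : ∀ θ ∈ {θ' : EuclideanSpace ℝ (Fin D) | h θ' = h θ₀} ∩ U,
      (fderiv ℝ φ θ).comp (ContinuousLinearMap.adjoint (fderiv ℝ φ θ)) = K (φ θ))
    (T : ℝ) (hT : 0 < T)
    (θ : ℝ → EuclideanSpace ℝ (Fin D))
    (hθ₀ : θ 0 = θ₀)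
    (hflow : ∀ t ∈ Set.Ico (0 : ℝ) T,
      HasDerivWithinAt θ (-(gradient (f ∘ φ) (θ t))) (Set.Ico (0 : ℝ) T) t) :
    ∀ t ∈ Set.Ico (0 : ℝ) T, θ t ∈ U →
      ((fderiv ℝ φ (θ t)).comp (ContinuousLinearMap.adjoint (fderiv ℝ φ (θ t)))
          = K (φ (θ t)) ∧
        HasDerivWithinAt (fun s => φ (θ s))
          (-(K (φ (θ t)) (gradient f (φ (θ t))))) (Set.Ico (0 : ℝ) T) t) := by
  have hφd : Differentiable ℝ φ := hφ.differentiable (by norm_num)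
  have hfd : Differentiable ℝ f := hf.differentiable (by norm_num)
  have hhd : Differentiable ℝ h := hh.differentiable (by norm_num)
  -- the derivative of h along the flow vanishes
  have hder0 : ∀ x : EuclideanSpace ℝ (Fin D),
      fderiv ℝ h x (-(gradient (f ∘ φ) x)) = 0 := by
    intro x
    ext k
    have hproj : (fun y => h y k) = (EuclideanSpace.proj k : EuclideanSpace ℝ (Fin N) →L[ℝ] ℝ) ∘ h := rfl
    have hk : fderiv ℝ h x (-(gradient (f ∘ φ) x)) k
        = fderiv ℝ (fun y => h y k) x (-(gradient (f ∘ φ) x)) := by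
      rw [hproj, fderiv_comp x (EuclideanSpace.proj k).differentiableAt (hhd x)]
      simp only [ContinuousLinearMap.fderiv]
      rfl
    rw [hk, ← inner_gradient_apply', gradient_comp_eq' φ f hφd hfd x, inner_neg_right,
      ContinuousLinearMap.adjoint_inner_right, hcons x k]
    simp
  -- h is conserved along the flow
  intro t ht htU
  have hconserved : h (θ t) = h θ₀ := by
    have hc : ∀ y ∈ Set.Icc (0 : ℝ) t, (fun s => h (θ s)) y = (fun s => h (θ s)) 0 := by
      apply constant_of_has_deriv_right_zero
      · -- continuity
        apply (hhd.continuous.comp_continuousOn)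
        intro s hs
        have hs' : s ∈ Set.Ico (0 : ℝ) T := ⟨hs.1, lt_of_le_of_lt hs.2 ht.2⟩
        exact ((hflow s hs').continuousWithinAt).mono
          (fun y hy => (⟨hy.1, lt_of_le_of_lt hy.2 ht.2⟩ : y ∈ Set.Ico (0:ℝ) T))
      · intro s hs
        have hs' : s ∈ Set.Ico (0 : ℝ) T := ⟨hs.1, lt_of_lt_of_le hs.2 ht.2.le⟩
        have H := ((hhd (θ s)).hasFDerivAt).comp_hasDerivWithinAt s (hflow s hs')
        rw [hder0 (θ s)] at H
        refine HasDerivWithinAt.mono_of_mem_nhdsWithin H ?_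
        rw [mem_nhdsWithin]
        exact ⟨Set.Iio T, isOpen_Iio, hs'.2, fun y hy => ⟨le_trans hs'.1 hy.2, hy.1⟩⟩
    have := hc t ⟨ht.1, le_rfl⟩
    simpa [hθ₀] using this
  have hfirst : (fderiv ℝ φ (θ t)).comp (ContinuousLinearMap.adjoint (fderiv ℝ φ (θ t)))
      = K (φ (θ t)) := hK (θ t) ⟨hconserved, htU⟩
  refine ⟨hfirst, ?_⟩
  have H := ((hφd (θ t)).hasFDerivAt).comp_hasDerivWithinAt t (hflow t ht)
  have hval : fderiv ℝ φ (θ t) (-(gradient (f ∘ φ) (θ t)))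
      = -(K (φ (θ t)) (gradient f (φ (θ t)))) := by
    rw [map_neg, gradient_comp_eq' φ f hφd hfd, ← ContinuousLinearMap.comp_apply, hfirst]
  rwa [hval] at H
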